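/- If Q is a minimal witness to a set Γ of k pairwise non-isomorphic posets each of size n, with k ≥ 3, then |Q| ≤ n(k−1). -/

import Mathlib

/-!
Formalization framework: finite posets are bundled as `FinPartOrd.{0}`, downsets are
`Finset`s of elements, unlabelled posets are isomorphism classes (`UPoset`), and a witness
of a set `Γ` of unlabelled posets at size `n` is a finite poset whose set of size-`n`
downsets, up to isomorphism, is exactly `Γ`.
-/

attribute [local instance] Classical.propDecidable

noncomputable section

open Finset

/-- `D` is a downset of the finite poset `Q`. -/
def IsDownset (Q : FinPartOrd.{0}) (D : Finset ↥Q) : Prop :=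
  ∀ ⦃a b : ↥Q⦄, a ∈ D → b ≤ a → b ∈ D

/-- The induced subposet of `Q` on a finset `D` of its elements. -/
def subposet (Q : FinPartOrd.{0}) (D : Finset ↥Q) : FinPartOrd.{0} :=
  FinPartOrd.of {x : ↥Q // x ∈ D}

/-- The isomorphism setoid on finite posets. -/
def isoSetoid : Setoid FinPartOrd.{0} where
  r P Q := Nonempty (↥P ≃o ↥Q)
  iseqv := ⟨fun _ => ⟨OrderIso.refl _⟩, fun ⟨e⟩ => ⟨e.symm⟩, fun ⟨e⟩ ⟨f⟩ => ⟨e.trans f⟩⟩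

/-- Unlabelled finite posets: isomorphism classes of finite posets. -/
def UPoset := Quotient isoSetoid

/-- The isomorphism class of a finite poset. -/
def cls (P : FinPartOrd.{0}) : UPoset := Quotient.mk isoSetoid P

/-- The number of elements of a finite poset. -/
def size (Q : FinPartOrd.{0}) : ℕ := Fintype.card ↥Q

/-- The size of an isomorphism class of finite posets. -/
def usize : UPoset → ℕ :=
  Quotient.lift size fun _ _ h => h.elim fun e => Fintype.card_congr e.toEquiv

/-- `D_n(Q)` : the set of downsets of `Q` of size `n`, up to isomorphism. -/
def DSet (n : ℕ) (Q : FinPartOrd.{0}) : Set UPoset :=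
  {c | ∃ D : Finset ↥Q, IsDownset Q D ∧ D.card = n ∧ cls (subposet Q D) = c}

/-- `d_n(Q)` : the number of isomorphism classes of downsets of `Q` of size `n`. -/
def dNum (n : ℕ) (Q : FinPartOrd.{0}) : ℕ := (DSet n Q).ncard

/-- `D(Q)` : the set of nonempty downsets of `Q`, up to isomorphism. -/
def DAllSet (Q : FinPartOrd.{0}) : Set UPoset :=
  {c | ∃ D : Finset ↥Q, IsDownset Q D ∧ D.Nonempty ∧ cls (subposet Q D) = c}

/-- `Q` is a witness of the set `Γ` of unlabelled posets (at size `n`): the set of size-`n`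
downsets of `Q`, up to isomorphism, is exactly `Γ`. -/
def IsWitness (n : ℕ) (Γ : Set UPoset) (Q : FinPartOrd.{0}) : Prop := DSet n Q = Γ

/-- `Q` is a minimal witness of `Γ` : `Q` is a witness and no proper downset of `Q` is
itself a witness of `Γ`. -/
def IsMinimalWitness (n : ℕ) (Γ : Set UPoset) (Q : FinPartOrd.{0}) : Prop :=
  IsWitness n Γ Q ∧
    ∀ D : Finset ↥Q, IsDownset Q D → D ≠ Finset.univ → ¬IsWitness n Γ (subposet Q D)

/-- The height of an element: the number of elements of a longest chain whose maximum is `x`. -/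
def heightEl (Q : FinPartOrd.{0}) (x : ↥Q) : ℕ :=
  sSup {k | ∃ c : Finset ↥Q, IsChain (· ≤ ·) (c : Set ↥Q) ∧ x ∈ c ∧ (∀ y ∈ c, y ≤ x) ∧ c.card = k}

/-- The height of a finite poset: the number of elements of a longest chain. -/
def posetHeight (Q : FinPartOrd.{0}) : ℕ :=
  sSup {k | ∃ c : Finset ↥Q, IsChain (· ≤ ·) (c : Set ↥Q) ∧ c.card = k}

/-- A finite poset is Newtonian if every element of level `i` covers every element of
level `i - 1`. -/
def Newtonian (Q : FinPartOrd.{0}) : Prop :=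
  ∀ x y : ↥Q, heightEl Q y = heightEl Q x + 1 → x ⋖ y

/-- A finite poset is connected if it is nonempty and any two elements are joined by a
comparability path. -/
def ConnectedPoset (Q : FinPartOrd.{0}) : Prop :=
  Nonempty ↥Q ∧ ∀ x y : ↥Q, Relation.ReflTransGen (fun a b : ↥Q => a ≤ b ∨ b ≤ a) x y

/-- `x` is a maximal element of the subset `W` of `Q`. -/
def IsMaxIn (Q : FinPartOrd.{0}) (W : Finset ↥Q) (x : ↥Q) : Prop :=
  x ∈ W ∧ ∀ y ∈ W, x ≤ y → y = x

/-- `x` is a maximal element of the finite poset `R`. -/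
def IsMaxEl (R : FinPartOrd.{0}) (x : ↥R) : Prop := ∀ y, x ≤ y → y = x

/-- A poset of type 𝒲 : the disjoint union of two connected Newtonian posets that are not
isomorphic, but which only differ in one maximal element (they become isomorphic after the
removal of a suitable maximal element from each). -/
def TypeW (P : FinPartOrd.{0}) : Prop :=
  ∃ W₁ W₂ : Finset ↥P,
    W₁ ∪ W₂ = Finset.univ ∧ Disjoint W₁ W₂ ∧
    (∀ x ∈ W₁, ∀ y ∈ W₂, ¬x ≤ y ∧ ¬y ≤ x) ∧
    ConnectedPoset (subposet P W₁) ∧ ConnectedPoset (subposet P W₂) ∧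
    Newtonian (subposet P W₁) ∧ Newtonian (subposet P W₂) ∧
    ¬Nonempty (↥(subposet P W₁) ≃o ↥(subposet P W₂)) ∧
    ∃ x y, IsMaxIn P W₁ x ∧ IsMaxIn P W₂ y ∧
      Nonempty (↥(subposet P (W₁.erase x)) ≃o ↥(subposet P (W₂.erase y)))

/-- An antichain on `i` elements. -/
def AntichainFin (i : ℕ) : Type := Fin i

instance (i : ℕ) : PartialOrder (AntichainFin i) where
  le x y := x = y
  le_refl _ := rfl
  le_trans a b c h₁ h₂ := show a = c from (show a = b from h₁).trans (show b = c from h₂)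
  le_antisymm _ _ h _ := h

instance (i : ℕ) : Fintype (AntichainFin i) := inferInstanceAs (Fintype (Fin i))
instance (i : ℕ) : Fintype (WithTop (AntichainFin i)) :=
  inferInstanceAs (Fintype (Option (Fin i)))

/-- `Λ_i`: the poset with `i` minimal elements and one maximal element above all of them. -/
def Lambda (i : ℕ) : FinPartOrd.{0} := FinPartOrd.of (WithTop (AntichainFin i))

/-- `k` disjoint copies of a poset `α`. -/
def Copies (k : ℕ) (α : Type) : Type := Fin k × α

instance (k : ℕ) (α : Type) [PartialOrder α] : PartialOrder (Copies k α) where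
  le x y := x.1 = y.1 ∧ x.2 ≤ y.2
  le_refl _ := ⟨rfl, le_refl _⟩
  le_trans _ _ _ h₁ h₂ := ⟨h₁.1.trans h₂.1, le_trans h₁.2 h₂.2⟩
  le_antisymm x y h₁ h₂ := by
    obtain ⟨x₁, x₂⟩ := x
    obtain ⟨y₁, y₂⟩ := y
    obtain ⟨h, h'⟩ := h₁
    cases h
    exact congrArg _ (le_antisymm h' h₂.2)

instance (k : ℕ) (α : Type) [Fintype α] : Fintype (Copies k α) :=
  inferInstanceAs (Fintype (Fin k × α))

/-- `H_ℓ`: the poset whose connected components are `ℓ` copies of `Λ₂` and one copy of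
`Λ_{3(ℓ-1)}`. -/
def Hposet (ℓ : ℕ) : FinPartOrd.{0} :=
  FinPartOrd.of (Copies ℓ (WithTop (AntichainFin 2)) ⊕ WithTop (AntichainFin (3 * (ℓ - 1))))

/-- The poset `P₀` placed above a chain of `i` elements. -/
def withChain (P₀ : FinPartOrd.{0}) (i : ℕ) : FinPartOrd.{0} :=
  FinPartOrd.of (Fin i ⊕ₗ ↥P₀)

/-- The disjoint union of two finite posets. -/
def disjSum (P R : FinPartOrd.{0}) : FinPartOrd.{0} := FinPartOrd.of (↥P ⊕ ↥R)

/-- The poset `P_iR_i`: the disjoint union of `P₀` and `R₀` each placed above a chain of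
`i` elements. -/
def PRposet (P₀ R₀ : FinPartOrd.{0}) (i : ℕ) : FinPartOrd.{0} :=
  disjSum (withChain P₀ i) (withChain R₀ i)

/-- `C(P₀R₀) = |D(P₀)| + |D(R₀)| − |D(P₀) ∩ D(R₀)|`. -/
def CNum (P₀ R₀ : FinPartOrd.{0}) : ℕ :=
  (DAllSet P₀).ncard + (DAllSet R₀).ncard - (DAllSet P₀ ∩ DAllSet R₀).ncard

/-- The vertices of the exchange graph: the downsets of `Q` of size `n`, as actual subsets. -/
def EGVert (n : ℕ) (Q : FinPartOrd.{0}) : Type :=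
  {D : Finset ↥Q // IsDownset Q D ∧ D.card = n}

/-- The exchange graph `G_n(Q)`: two size-`n` downsets are adjacent iff they differ by
exactly one element. -/
def ExchangeGraph (n : ℕ) (Q : FinPartOrd.{0}) : SimpleGraph (EGVert n Q) where
  Adj X Y := (X.1 \ Y.1).card = 1 ∧ (Y.1 \ X.1).card = 1
  symm := ⟨fun X Y h => ⟨h.2, h.1⟩⟩
  loopless := ⟨fun X h => by
    simp only [Finset.sdiff_self, Finset.card_empty] at h
    exact absurd h.1 (by simp)⟩

/-- The downset `D` of `Q`, viewed as a poset, is isomorphic (a "copy of") `P`. -/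
def IsoTo (Q : FinPartOrd.{0}) (D : Finset ↥Q) (P : FinPartOrd.{0}) : Prop :=
  Nonempty (↥(subposet Q D) ≃o ↥P)

/-- A path `A :: M ++ [C]` in the exchange graph `G_n(Q)` whose first vertex is a copy of
`Pa`, whose last vertex is a copy of `Pb`, and all of whose internal vertices are copies of
`Pmid`. -/
def SpecialPath (n : ℕ) (Q : FinPartOrd.{0}) (Pa Pmid Pb : FinPartOrd.{0})
    (A : EGVert n Q) (M : List (EGVert n Q)) (C : EGVert n Q) : Prop :=
  List.Chain' (ExchangeGraph n Q).Adj (A :: M ++ [C]) ∧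
    IsoTo Q A.1 Pa ∧ IsoTo Q C.1 Pb ∧ ∀ v ∈ M, IsoTo Q v.1 Pmid

/-- `T` is an antichain in `Q`. -/
def IsAntichainIn (Q : FinPartOrd.{0}) (T : Finset ↥Q) : Prop :=
  ∀ x ∈ T, ∀ y ∈ T, x ≤ y → x = y

/-- The possible shapes of `A \ X` and `C \ X`: an antichain possibly together with a single
element below all of it and/or a single element above all of it, or a two-element chain
together with one incomparable element. -/
def GoodForm (Q : FinPartOrd.{0}) (S : Finset ↥Q) : Prop :=
  (∃ T : Finset ↥Q, IsAntichainIn Q T ∧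
    (S = T ∨
      (∃ b, b ∉ T ∧ S = insert b T ∧ ∀ x ∈ T, b < x) ∨
      (∃ t, t ∉ T ∧ S = insert t T ∧ ∀ x ∈ T, x < t) ∨
      (∃ b t, b ∉ T ∧ t ∉ T ∧ b ≠ t ∧ S = insert b (insert t T) ∧
        (∀ x ∈ T, b < x) ∧ ∀ x ∈ T, x < t))) ∨
  (∃ x y z : ↥Q, S = {x, y, z} ∧ x ≠ y ∧ x ≠ z ∧ y ≠ z ∧ x < y ∧
    ¬x ≤ z ∧ ¬z ≤ x ∧ ¬y ≤ z ∧ ¬z ≤ y)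

/-! ### Auxiliary machinery for the proof of Statement 12 -/

namespace MWB

open Finset

lemma cls_eq_of_iso {P R : FinPartOrd.{0}} (h : ↥P ≃o ↥R) : cls P = cls R :=
  Quot.sound ⟨h⟩

lemma card_subposet' (Q : FinPartOrd.{0}) (D : Finset ↥Q) :
    Fintype.card ↥(subposet Q D) = D.card :=
  (Fintype.card_congr (show ↥(subposet Q D) ≃ ↑D from Equiv.refl _)).trans
    (Fintype.card_coe D)

variable {Q : FinPartOrd.{0}}

/-- Forgetting the subposet structure. -/
def ofSub (E : Finset ↥Q) : ↥(subposet Q E) → ↥Q := Subtype.val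

lemma ofSub_injective (E : Finset ↥Q) : Function.Injective (ofSub (Q := Q) E) :=
  fun _ _ h => Subtype.ext h

lemma ofSub_mem (E : Finset ↥Q) (y : ↥(subposet Q E)) : ofSub E y ∈ E := y.2

lemma ofSub_le_iff (E : Finset ↥Q) (y z : ↥(subposet Q E)) :
    y ≤ z ↔ ofSub E y ≤ ofSub E z := Iff.rfl

/-- The order isomorphism between a downset of a subposet and the corresponding
subposet of the ambient poset. -/
noncomputable def glueIso (E : Finset ↥Q) (D' : Finset ↥(subposet Q E)) :
    ↥(subposet (subposet Q E) D') ≃o ↥(subposet Q (D'.image (ofSub E))) where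
  toEquiv := Equiv.ofBijective
    (fun z => ⟨ofSub E z.1, Finset.mem_image.mpr ⟨z.1, z.2, rfl⟩⟩)
    (by
      constructor
      · intro a b hab
        have h1 := congrArg
          (fun (w : {w : ↥Q // w ∈ D'.image (ofSub E)}) => w.val) hab
        exact Subtype.ext (Subtype.ext h1)
      · intro w
        obtain ⟨y, hy, hyw⟩ := Finset.mem_image.mp w.2
        exact ⟨⟨y, hy⟩, Subtype.ext hyw⟩)
  map_rel_iff' := Iff.rfl

lemma image_cls (E : Finset ↥Q) (D' : Finset ↥(subposet Q E)) :
    cls (subposet Q (D'.image (ofSub E))) = cls (subposet (subposet Q E) D') :=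
  (cls_eq_of_iso (glueIso E D')).symm

lemma image_card (E : Finset ↥Q) (D' : Finset ↥(subposet Q E)) :
    (D'.image (ofSub E)).card = D'.card :=
  Finset.card_image_of_injective _ (ofSub_injective E)

lemma image_downset (E : Finset ↥Q) (hE : IsDownset Q E) (D' : Finset ↥(subposet Q E))
    (hD' : IsDownset (subposet Q E) D') : IsDownset Q (D'.image (ofSub E)) := by
  intro a b ha hba
  obtain ⟨y, hy, hya⟩ := Finset.mem_image.mp ha
  have hbE : b ∈ E := hE (hya ▸ y.2) hba
  have : (⟨b, hbE⟩ : ↥(subposet Q E)) ≤ y := by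
    show b ≤ ofSub E y
    show b ≤ ofSub E y
    rw [hya]; exact hba
  have hmem := hD' hy this
  exact Finset.mem_image.mpr ⟨⟨b, hbE⟩, hmem, rfl⟩

lemma restrict_exists (E : Finset ↥Q) {D : Finset ↥Q} (hDE : D ⊆ E) :
    ∃ D' : Finset ↥(subposet Q E), D'.image (ofSub E) = D := by
  refine ⟨Finset.univ.filter (fun y => ofSub E y ∈ D), ?_⟩
  ext w
  simp only [Finset.mem_image, Finset.mem_filter, Finset.mem_univ, true_and]
  constructor
  · rintro ⟨y, hy, rfl⟩; exact hy
  · intro hw; exact ⟨⟨w, hDE hw⟩, hw, rfl⟩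

lemma downset_restrict (E : Finset ↥Q) {D : Finset ↥Q} (hD : IsDownset Q D)
    (D' : Finset ↥(subposet Q E)) (him : D'.image (ofSub E) = D) :
    IsDownset (subposet Q E) D' := by
  intro a b ha hba
  have haD : ofSub E a ∈ D := him ▸ Finset.mem_image.mpr ⟨a, ha, rfl⟩
  have hbD : ofSub E b ∈ D := hD haD ((ofSub_le_iff E b a).mp hba)
  have : ofSub E b ∈ D'.image (ofSub E) := him.symm ▸ hbD
  obtain ⟨y, hy, hyb⟩ := Finset.mem_image.mp this
  rwa [ofSub_injective E hyb] at hy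

lemma DSet_sub (n : ℕ) (E : Finset ↥Q) (hE : IsDownset Q E) :
    DSet n (subposet Q E) =
      {c | ∃ D : Finset ↥Q, IsDownset Q D ∧ D ⊆ E ∧ D.card = n ∧ cls (subposet Q D) = c} := by
  ext c
  constructor
  · rintro ⟨D', h1, h2, h3⟩
    refine ⟨D'.image (ofSub E), image_downset E hE D' h1, ?_, ?_, ?_⟩
    · intro w hw
      obtain ⟨y, hy, hyw⟩ := Finset.mem_image.mp hw
      exact hyw ▸ y.2
    · rw [image_card]; exact h2
    · rw [image_cls]; exact h3
  · rintro ⟨D, hdown, hsub, hcard, hcls⟩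
    obtain ⟨D', him⟩ := restrict_exists E hsub
    refine ⟨D', downset_restrict E hdown D' him, ?_, ?_⟩
    · rw [← image_card E D', him]; exact hcard
    · rw [← image_cls, him]; exact hcls

lemma missing_class {n : ℕ} {Γ : Set UPoset} (hQ : IsMinimalWitness n Γ Q)
    (E : Finset ↥Q) (hE : IsDownset Q E) (hne : E ≠ Finset.univ) :
    ∃ γ ∈ Γ, ∀ D : Finset ↥Q, IsDownset Q D → D.card = n → cls (subposet Q D) = γ →
      ¬ D ⊆ E := by
  have hnw : DSet n (subposet Q E) ≠ Γ := hQ.2 E hE hne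
  have hsub : DSet n (subposet Q E) ⊆ Γ := by
    rw [DSet_sub n E hE]
    rintro c ⟨D, h1, _, h3, h4⟩
    rw [← hQ.1]
    exact ⟨D, h1, h3, h4⟩
  obtain ⟨γ, hγΓ, hγ⟩ : ∃ γ ∈ Γ, γ ∉ DSet n (subposet Q E) := by
    by_contra h
    push_neg at h
    exact hnw (Set.Subset.antisymm hsub h)
  refine ⟨γ, hγΓ, fun D h1 h2 h3 hDE => hγ ?_⟩
  rw [DSet_sub n E hE]
  exact ⟨D, h1, hDE, h2, h3⟩

/-- The intersection of all downsets of size `n` of class `γ`. -/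
noncomputable def SC (n : ℕ) (Q : FinPartOrd.{0}) (γ : UPoset) : Finset ↥Q :=
  Finset.univ.filter fun x =>
    ∀ D : Finset ↥Q, IsDownset Q D → D.card = n → cls (subposet Q D) = γ → x ∈ D

lemma mem_SC {n : ℕ} {γ : UPoset} {x : ↥Q} :
    x ∈ SC n Q γ ↔
      ∀ D : Finset ↥Q, IsDownset Q D → D.card = n → cls (subposet Q D) = γ → x ∈ D := by
  simp [SC]

lemma SC_subset {n : ℕ} {γ : UPoset} {D : Finset ↥Q} (hD : IsDownset Q D)
    (hc : D.card = n) (hcls : cls (subposet Q D) = γ) : SC n Q γ ⊆ D :=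
  fun _ hx => (mem_SC.mp hx) D hD hc hcls

lemma SC_downset (n : ℕ) (γ : UPoset) : IsDownset Q (SC n Q γ) := by
  intro a b ha hba
  rw [mem_SC] at ha ⊢
  intro D h1 h2 h3
  exact h1 (ha D h1 h2 h3) hba

lemma SC_cover {n : ℕ} {Γ : Set UPoset} (hQ : IsMinimalWitness n Γ Q) (x : ↥Q) :
    ∃ γ ∈ Γ, x ∈ SC n Q γ := by
  classical
  set E : Finset ↥Q := Finset.univ.filter (fun y => ¬ x ≤ y) with hEdef
  have hxE : x ∉ E := by simp [hEdef]
  have hE : IsDownset Q E := by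
    intro a b ha hba
    simp only [hEdef, Finset.mem_filter, Finset.mem_univ, true_and] at ha ⊢
    exact fun hxb => ha (le_trans hxb hba)
  have hne : E ≠ Finset.univ := by
    intro h
    exact hxE (h ▸ Finset.mem_univ x)
  obtain ⟨γ, hγΓ, hγ⟩ := missing_class hQ E hE hne
  refine ⟨γ, hγΓ, mem_SC.mpr fun D h1 h2 h3 => ?_⟩
  have : ¬ D ⊆ E := hγ D h1 h2 h3
  obtain ⟨d, hdD, hdE⟩ := Finset.not_subset.mp this
  have hxd : x ≤ d := by
    by_contra hxd
    exact hdE (by simp [hEdef, hxd])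
  exact h1 hdD hxd

lemma swap_pair (n : ℕ) (Q : FinPartOrd.{0}) {X Y : Finset ↥Q} (hX : IsDownset Q X)
    (hXc : X.card = n) (hY : IsDownset Q Y) (hYc : Y.card = n)
    (hne : cls (subposet Q X) ≠ cls (subposet Q Y)) :
    ∃ X' Y' : Finset ↥Q, IsDownset Q X' ∧ X'.card = n ∧ IsDownset Q Y' ∧ Y'.card = n ∧
      cls (subposet Q X') ≠ cls (subposet Q Y') ∧ (X' ∪ Y').card ≤ n + 1 := by
  classical
  suffices H : ∀ d (X Y : Finset ↥Q), IsDownset Q X → X.card = n → IsDownset Q Y →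
      Y.card = n → cls (subposet Q X) ≠ cls (subposet Q Y) → (Y \ X).card = d →
      ∃ X' Y' : Finset ↥Q, IsDownset Q X' ∧ X'.card = n ∧ IsDownset Q Y' ∧ Y'.card = n ∧
        cls (subposet Q X') ≠ cls (subposet Q Y') ∧ (X' ∪ Y').card ≤ n + 1 by
    exact H _ X Y hX hXc hY hYc hne rfl
  intro d
  induction d using Nat.strong_induction_on with
  | _ d IH =>
    intro X Y hX hXc hY hYc hne hd
    have hcc : (X \ Y).card = (Y \ X).card := by
      have h1 := Finset.card_sdiff_add_card_inter X Y
      have h2 := Finset.card_sdiff_add_card_inter Y X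
      rw [Finset.inter_comm] at h2
      omega
    rcases Nat.eq_zero_or_pos d with rfl | hdpos
    · -- Y ⊆ X hence Y = X, contradiction
      have hYX : Y ⊆ X := Finset.sdiff_eq_empty_iff_subset.mp (Finset.card_eq_zero.mp hd)
      have : Y = X := Finset.eq_of_subset_of_card_le hYX (by omega)
      exact absurd (this ▸ rfl) (Ne.symm hne)
    by_cases hd1 : d = 1
    · refine ⟨X, Y, hX, hXc, hY, hYc, hne, ?_⟩
      have := Finset.card_sdiff_add_card X Y
      omega
    · -- construct the intermediate downset Z
      have hXYne : (X \ Y).Nonempty := Finset.card_pos.mp (by omega)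
      have hYXne : (Y \ X).Nonempty := Finset.card_pos.mp (by omega)
      obtain ⟨x, hx, hxmax⟩ := (X \ Y).exists_maximal hXYne
      obtain ⟨y, hy, hymin⟩ := (Y \ X).exists_minimal hYXne
      obtain ⟨hxX, hxnY⟩ := Finset.mem_sdiff.mp hx
      obtain ⟨hyY, hynX⟩ := Finset.mem_sdiff.mp hy
      have hxy : x ≠ y := fun h => hxnY (h ▸ hyY)
      have hxmaxX : ∀ a ∈ X, x ≤ a → a = x := by
        intro a haX hxa
        by_cases haY : a ∈ Y
        · exact absurd (hY haY hxa) hxnY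
        · by_contra hax
          exact hax (le_antisymm (hxmax (Finset.mem_sdiff.mpr ⟨haX, haY⟩) hxa) hxa)
      set Z : Finset ↥Q := insert y (X.erase x) with hZdef
      have hyne : y ∉ X.erase x := fun h => hynX (Finset.mem_of_mem_erase h)
      have hXpos : 0 < X.card := Finset.card_pos.mpr ⟨x, hxX⟩
      have hZc : Z.card = n := by
        rw [hZdef, Finset.card_insert_of_notMem hyne]
        have := Finset.card_erase_add_one hxX
        omega
      have hZdown : IsDownset Q Z := by
        intro a b haZ hba
        rcases Finset.mem_insert.mp haZ with hay | haX'
        · rw [hay] at hba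
          by_cases hby : b = y
          · rw [hby]; exact Finset.mem_insert_self y _
          · have hbY : b ∈ Y := hY hyY hba
            have hbX : b ∈ X := by
              by_contra hbX
              exact hby (le_antisymm hba (hymin (Finset.mem_sdiff.mpr ⟨hbY, hbX⟩) hba))
            have hbx : b ≠ x := fun h => hxnY (h ▸ hbY)
            exact Finset.mem_insert_of_mem (Finset.mem_erase.mpr ⟨hbx, hbX⟩)
        · have haX : a ∈ X := Finset.mem_of_mem_erase haX'
          have hbX : b ∈ X := hX haX hba
          have hbx : b ≠ x := by
            intro h
            subst h
            exact (Finset.mem_erase.mp haX').1 (hxmaxX a haX hba)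
          exact Finset.mem_insert_of_mem (Finset.mem_erase.mpr ⟨hbx, hbX⟩)
      have hYZ : Y \ Z = (Y \ X).erase y := by
        ext z
        simp only [hZdef, Finset.mem_sdiff, Finset.mem_insert, Finset.mem_erase, not_or]
        constructor
        · rintro ⟨hzY, hzy, hz⟩
          refine ⟨hzy, hzY, fun hzX => ?_⟩
          by_cases hzx : z = x
          · exact hxnY (hzx ▸ hzY)
          · exact hz ⟨hzx, hzX⟩
        · rintro ⟨hzy, hzY, hzX⟩
          exact ⟨hzY, hzy, fun h => hzX h.2⟩
      have hYZc : (Y \ Z).card = d - 1 := by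
        rw [hYZ]
        have := Finset.card_erase_add_one (Finset.mem_sdiff.mpr ⟨hyY, hynX⟩)
        omega
      by_cases hclsZ : cls (subposet Q Z) = cls (subposet Q X)
      · exact IH (d - 1) (by omega) Z Y hZdown hZc hY hYc (by rw [hclsZ]; exact hne) hYZc
      · refine ⟨X, Z, hX, hXc, hZdown, hZc, fun h => hclsZ h.symm, ?_⟩
        have hXZ : X ∪ Z = insert y X := by
          ext z
          simp only [hZdef, Finset.mem_union, Finset.mem_insert, Finset.mem_erase]
          constructor
          · rintro (h | h | ⟨_, h⟩)
            · exact Or.inr h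
            · exact Or.inl h
            · exact Or.inr h
          · rintro (h | h)
            · exact Or.inr (Or.inl h)
            · exact Or.inl h
        rw [hXZ, Finset.card_insert_of_notMem hynX, hXc]

lemma cover_bound (n : ℕ) (Q : FinPartOrd.{0}) (B : Finset ↥Q) (A : Finset UPoset)
    (hcov : ∀ x : ↥Q, x ∈ B ∨ ∃ γ ∈ A, x ∈ SC n Q γ) :
    size Q ≤ B.card + ∑ γ ∈ A, (SC n Q γ).card := by
  classical
  have h1 : (Finset.univ : Finset ↥Q) ⊆ B ∪ A.biUnion (SC n Q) := by
    intro x _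
    rcases hcov x with h | ⟨γ, hγ, h⟩
    · exact Finset.mem_union_left _ h
    · exact Finset.mem_union_right _ (Finset.mem_biUnion.mpr ⟨γ, hγ, h⟩)
  calc size Q = (Finset.univ : Finset ↥Q).card := Finset.card_univ.symm
    _ ≤ (B ∪ A.biUnion (SC n Q)).card := Finset.card_le_card h1
    _ ≤ B.card + (A.biUnion (SC n Q)).card := Finset.card_union_le _ _
    _ ≤ B.card + ∑ γ ∈ A, (SC n Q γ).card :=
        Nat.add_le_add_left Finset.card_biUnion_le _

lemma sum_SC_le (n : ℕ) (Q : FinPartOrd.{0}) (A : Finset UPoset)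
    (h : ∀ γ ∈ A, (SC n Q γ).card ≤ n) :
    ∑ γ ∈ A, (SC n Q γ).card ≤ A.card * n := by
  calc ∑ γ ∈ A, (SC n Q γ).card ≤ A.card • n := Finset.sum_le_card_nsmul _ _ _ h
    _ = A.card * n := by rw [smul_eq_mul]

/-- The final exchange construction, used symmetrically in the two classes `a`, `b`. -/
lemma endgame (n : ℕ) (Q : FinPartOrd.{0}) (Γ : Set UPoset) (hwit : DSet n Q = Γ)
    (a b γ₀ : UPoset) (hb : b ∈ Γ) (hγ₀ : γ₀ ∈ Γ) (hγ₀a : γ₀ ≠ a) (hγ₀b : γ₀ ≠ b)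
    (hcup : (SC n Q a ∪ SC n Q b).card = n + 1)
    (hSane : (SC n Q a).Nonempty)
    (hSble : (SC n Q b).card ≤ n)
    (hother : ∀ γ ∈ Γ, γ ≠ a → γ ≠ b → (SC n Q γ).card = n)
    (hdisjU : ∀ γ ∈ Γ, γ ≠ a → γ ≠ b →
      ∀ p, p ∈ SC n Q γ → p ∈ SC n Q a ∪ SC n Q b → False)
    (hdisj2 : ∀ γ γ', γ ∈ Γ → γ' ∈ Γ → γ ≠ a → γ ≠ b → γ' ≠ a → γ' ≠ b → γ ≠ γ' →
      ∀ p, p ∈ SC n Q γ → p ∈ SC n Q γ' → False)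
    (x m u : ↥Q) (hn2 : 2 ≤ n)
    (hU'down : IsDownset Q ((SC n Q γ₀).erase x)) (hxU : x ∈ SC n Q γ₀)
    (hu : u ∈ (SC n Q γ₀).erase x)
    (hmU : m ∉ SC n Q γ₀)
    (hMdown : IsDownset Q (insert m ((SC n Q γ₀).erase x)))
    (hMcard : (insert m ((SC n Q γ₀).erase x)).card = n)
    (hMcls : cls (subposet Q (insert m ((SC n Q γ₀).erase x))) = a) : False := by
  classical
  have hSaM : SC n Q a ⊆ insert m ((SC n Q γ₀).erase x) :=
    SC_subset hMdown hMcard hMcls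
  have hSa_sub : ∀ s ∈ SC n Q a, s = m := by
    intro s hs
    rcases Finset.mem_insert.mp (hSaM hs) with h | h
    · exact h
    · exact absurd (Finset.mem_union_left _ hs)
        (fun hc => hdisjU γ₀ hγ₀ hγ₀a hγ₀b s (Finset.mem_of_mem_erase h) hc)
  have hma : m ∈ SC n Q a := by
    obtain ⟨s, hs⟩ := hSane
    rw [← hSa_sub s hs]; exact hs
  have hsub1 : SC n Q a ∪ SC n Q b ⊆ insert m (SC n Q b) := by
    intro z hz
    rcases Finset.mem_union.mp hz with h | h
    · rw [hSa_sub z h]; exact Finset.mem_insert_self m _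
    · exact Finset.mem_insert_of_mem h
  have h2 : n + 1 ≤ (insert m (SC n Q b)).card := hcup ▸ Finset.card_le_card hsub1
  have hmb : m ∉ SC n Q b := by
    intro h
    rw [Finset.insert_eq_self.mpr h] at h2
    omega
  have hSbcard : (SC n Q b).card = n := by
    rw [Finset.card_insert_of_notMem hmb] at h2
    omega
  obtain ⟨m', hm'b, hm'min⟩ := (SC n Q b).exists_minimal (Finset.card_pos.mp (by omega))
  have hm'Qmin : ∀ w : ↥Q, w ≤ m' → w = m' := by
    intro w hw
    have hwb : w ∈ SC n Q b := SC_downset n b hm'b hw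
    by_contra hne
    exact hne (le_antisymm hw (hm'min hwb hw))
  have hm'U : m' ∉ SC n Q γ₀ := fun h =>
    hdisjU γ₀ hγ₀ hγ₀a hγ₀b m' h (Finset.mem_union_right _ hm'b)
  have hm'Ue : m' ∉ (SC n Q γ₀).erase x := fun h => hm'U (Finset.mem_of_mem_erase h)
  have hUcard : (SC n Q γ₀).card = n := hother γ₀ hγ₀ hγ₀a hγ₀b
  have hM'card : (insert m' ((SC n Q γ₀).erase x)).card = n := by
    rw [Finset.card_insert_of_notMem hm'Ue]
    have := Finset.card_erase_add_one hxU
    omega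
  have hM'down : IsDownset Q (insert m' ((SC n Q γ₀).erase x)) := by
    intro a' b' ha' hb'a
    rcases Finset.mem_insert.mp ha' with rfl | h
    · exact (hm'Qmin b' hb'a) ▸ Finset.mem_insert_self _ _
    · exact Finset.mem_insert_of_mem (hU'down h hb'a)
  set γs : UPoset := cls (subposet Q (insert m' ((SC n Q γ₀).erase x))) with hγsdef
  have hγsΓ : γs ∈ Γ := by
    rw [← hwit]
    exact ⟨_, hM'down, hM'card, rfl⟩
  by_cases h1 : γs = a
  · have : m ∈ insert m' ((SC n Q γ₀).erase x) :=
      SC_subset hM'down hM'card h1 hma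
    rcases Finset.mem_insert.mp this with h | h
    · exact hmb (h ▸ hm'b)
    · exact hmU (Finset.mem_of_mem_erase h)
  by_cases h2' : γs = b
  · have hsub : SC n Q b ⊆ insert m' ((SC n Q γ₀).erase x) :=
      SC_subset hM'down hM'card h2'
    have heq : SC n Q b = insert m' ((SC n Q γ₀).erase x) :=
      Finset.eq_of_subset_of_card_le hsub (by omega)
    have hub : u ∈ SC n Q b := heq ▸ Finset.mem_insert_of_mem hu
    exact hdisjU γ₀ hγ₀ hγ₀a hγ₀b u (Finset.mem_of_mem_erase hu)
      (Finset.mem_union_right _ hub)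
  · have hsub : SC n Q γs ⊆ insert m' ((SC n Q γ₀).erase x) :=
      SC_subset hM'down hM'card rfl
    have hγscard : (SC n Q γs).card = n := hother γs hγsΓ h1 h2'
    have heq : SC n Q γs = insert m' ((SC n Q γ₀).erase x) :=
      Finset.eq_of_subset_of_card_le hsub (by omega)
    by_cases h3 : γs = γ₀
    · rw [h3] at heq
      exact hm'U (heq ▸ Finset.mem_insert_self m' _)
    · have huγs : u ∈ SC n Q γs := heq ▸ Finset.mem_insert_of_mem hu
      exact hdisj2 γs γ₀ hγsΓ hγ₀ h1 h2' hγ₀a hγ₀b h3 u huγs (Finset.mem_of_mem_erase hu)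

end MWB

set_option maxHeartbeats 1600000

/-- A minimal witness `Q` to a set of `k ≥ 3` pairwise non-isomorphic
posets of size `n` satisfies `|Q| ≤ n(k−1)`. -/
theorem minimal_witness_bound_k3 (n k : ℕ) (hk : 3 ≤ k) (Γ : Set UPoset) (hΓfin : Γ.Finite)
    (hΓcard : Γ.ncard = k) (hΓsize : ∀ c ∈ Γ, usize c = n) (Q : FinPartOrd.{0})
    (hQ : IsMinimalWitness n Γ Q) :
    size Q ≤ n * (k - 1) := by
  classical
  by_contra hbig0
  push_neg at hbig0
  obtain ⟨k₃, rfl⟩ : ∃ k₃, k = k₃ + 3 := ⟨k - 3, by omega⟩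
  have hksub : k₃ + 3 - 1 = k₃ + 2 := rfl
  rw [hksub] at hbig0
  have hbig : n * (k₃ + 2) + 1 ≤ size Q := hbig0
  have hwit : DSet n Q = Γ := hQ.1
  have hrep : ∀ γ ∈ Γ, ∃ D : Finset ↥Q,
      IsDownset Q D ∧ D.card = n ∧ cls (subposet Q D) = γ := by
    intro γ hγ
    rw [← hwit] at hγ
    exact hγ
  have htwo : ∃ a b, a ∈ Γ ∧ b ∈ Γ ∧ a ≠ b :=
    (Set.one_lt_ncard_iff hΓfin).mp (by rw [hΓcard]; omega)
  -- `n ≥ 2` : otherwise there is at most one isomorphism class of size `n`.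
  have hn2 : 2 ≤ n := by
    by_contra hn
    push_neg at hn
    obtain ⟨γ₁, γ₂, hγ₁, hγ₂, hne⟩ := htwo
    obtain ⟨D₁, hD₁d, hD₁c, hD₁cls⟩ := hrep γ₁ hγ₁
    obtain ⟨D₂, hD₂d, hD₂c, hD₂cls⟩ := hrep γ₂ hγ₂
    have hcard1 : Fintype.card ↥(subposet Q D₁) = n := by
      rw [MWB.card_subposet']; exact hD₁c
    have hcard2 : Fintype.card ↥(subposet Q D₂) = n := by
      rw [MWB.card_subposet']; exact hD₂c
    have hs1 : Subsingleton ↥(subposet Q D₁) :=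
      Fintype.card_le_one_iff_subsingleton.mp (by omega)
    have e : ↥(subposet Q D₁) ≃ ↥(subposet Q D₂) := Fintype.equivOfCardEq (by omega)
    have hiso : cls (subposet Q D₁) = cls (subposet Q D₂) := by
      refine MWB.cls_eq_of_iso ⟨e, ?_⟩
      intro a b
      rw [Subsingleton.elim a b]
      simp
    rw [hD₁cls, hD₂cls] at hiso
    exact hne hiso
  have hSle : ∀ γ ∈ Γ, (MWB.SC n Q γ).card ≤ n := by
    intro γ hγ
    obtain ⟨D, h1, h2, h3⟩ := hrep γ hγ
    exact le_trans (Finset.card_le_card (MWB.SC_subset h1 h2 h3)) (le_of_eq h2)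
  have hcov : ∀ x : ↥Q, ∃ γ ∈ Γ, x ∈ MWB.SC n Q γ := MWB.SC_cover hQ
  -- an adjacent pair of downsets with different classes
  obtain ⟨γ₁, γ₂, hγ₁, hγ₂, hne12⟩ := htwo
  obtain ⟨D₁, hD₁d, hD₁c, hD₁cls⟩ := hrep γ₁ hγ₁
  obtain ⟨D₂, hD₂d, hD₂c, hD₂cls⟩ := hrep γ₂ hγ₂
  obtain ⟨X, Y, hXd, hXc, hYd, hYc, hXYne, hXYcard⟩ :=
    MWB.swap_pair n Q hD₁d hD₁c hD₂d hD₂c (by rw [hD₁cls, hD₂cls]; exact hne12)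
  set δ : UPoset := cls (subposet Q X) with hδdef
  set ε : UPoset := cls (subposet Q Y) with hεdef
  have hδΓ : δ ∈ Γ := by rw [← hwit]; exact ⟨X, hXd, hXc, rfl⟩
  have hεΓ : ε ∈ Γ := by rw [← hwit]; exact ⟨Y, hYd, hYc, rfl⟩
  have hδε : δ ≠ ε := hXYne
  have hcuple : (MWB.SC n Q δ ∪ MWB.SC n Q ε).card ≤ n + 1 := by
    refine le_trans (Finset.card_le_card ?_) hXYcard
    exact Finset.union_subset_union (MWB.SC_subset hXd hXc rfl) (MWB.SC_subset hYd hYc rfl)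
  set Γ' : Finset UPoset := hΓfin.toFinset with hΓ'def
  have hmemΓ' : ∀ γ, γ ∈ Γ' ↔ γ ∈ Γ := fun γ => Set.Finite.mem_toFinset hΓfin
  have hΓ'card : Γ'.card = k₃ + 3 := by
    rw [hΓ'def, ← Set.ncard_eq_toFinset_card Γ hΓfin]; exact hΓcard
  set A : Finset UPoset := (Γ'.erase δ).erase ε with hAdef
  have hεΓ'δ : ε ∈ Γ'.erase δ := Finset.mem_erase.mpr ⟨Ne.symm hδε, (hmemΓ' ε).mpr hεΓ⟩
  have hAcard : A.card = k₃ + 1 := by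
    have h1 := Finset.card_erase_add_one hεΓ'δ
    have h2 := Finset.card_erase_add_one ((hmemΓ' δ).mpr hδΓ)
    rw [hΓ'card] at h2
    rw [← hAdef] at h1
    omega
  have hmemA : ∀ γ, γ ∈ A ↔ (γ ∈ Γ ∧ γ ≠ δ ∧ γ ≠ ε) := by
    intro γ
    rw [hAdef]
    simp only [Finset.mem_erase, hmemΓ']
    tauto
  have hAle : ∀ γ ∈ A, (MWB.SC n Q γ).card ≤ n := fun γ hγ => hSle γ ((hmemA γ).mp hγ).1
  -- the master counting bound
  have hcb : ∀ (B : Finset ↥Q) (A' : Finset UPoset),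
      (∀ γ ∈ A, γ ∈ A' ∨ MWB.SC n Q γ ⊆ B) → MWB.SC n Q δ ∪ MWB.SC n Q ε ⊆ B →
      size Q ≤ B.card + ∑ γ ∈ A', (MWB.SC n Q γ).card := by
    intro B A' hsplit hB
    apply MWB.cover_bound
    intro x
    obtain ⟨γ, hγ, hx⟩ := hcov x
    by_cases h1 : γ = δ
    · exact Or.inl (hB (Finset.mem_union_left _ (h1 ▸ hx)))
    by_cases h2 : γ = ε
    · exact Or.inl (hB (Finset.mem_union_right _ (h2 ▸ hx)))
    rcases hsplit γ ((hmemA γ).mpr ⟨hγ, h1, h2⟩) with h | h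
    · exact Or.inr ⟨γ, h, hx⟩
    · exact Or.inl (h hx)
  have hbase : size Q ≤ (MWB.SC n Q δ ∪ MWB.SC n Q ε).card +
      ∑ γ ∈ A, (MWB.SC n Q γ).card :=
    hcb _ A (fun γ hγ => Or.inl hγ) (Finset.Subset.refl _)
  -- all classes other than δ, ε have full intersection of size n
  have F1 : ∀ γ ∈ A, (MWB.SC n Q γ).card = n := by
    intro γ₁ hγ₁A
    by_contra hne'
    have hlt : (MWB.SC n Q γ₁).card + 1 ≤ n := by
      have := hAle γ₁ hγ₁A
      omega
    have hsplit := Finset.add_sum_erase A (fun γ => (MWB.SC n Q γ).card) hγ₁A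
    have hsum : ∑ γ ∈ A.erase γ₁, (MWB.SC n Q γ).card ≤ (A.erase γ₁).card * n :=
      MWB.sum_SC_le n Q _ (fun γ hγ => hAle γ (Finset.mem_of_mem_erase hγ))
    have hec : (A.erase γ₁).card + 1 = k₃ + 1 := by
      have := Finset.card_erase_add_one hγ₁A
      omega
    have hec' : (A.erase γ₁).card = k₃ := by omega
    rw [hec'] at hsum
    have hb := hbase
    rw [← hsplit] at hb
    have := hcuple
    nlinarith [hbig, hb, hsum, hlt, this]
  -- the union of the two special intersections has exactly n+1 elements
  have F2 : (MWB.SC n Q δ ∪ MWB.SC n Q ε).card = n + 1 := by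
    by_contra hF2
    have hle : (MWB.SC n Q δ ∪ MWB.SC n Q ε).card ≤ n := by
      have := hcuple
      omega
    have hsum : ∑ γ ∈ A, (MWB.SC n Q γ).card ≤ A.card * n := MWB.sum_SC_le n Q A hAle
    rw [hAcard] at hsum
    nlinarith [hbig, hbase, hsum, hle]
  -- all intersections are nonempty
  have F3 : ∀ γ ∈ Γ, (MWB.SC n Q γ).Nonempty := by
    intro γ₀' hγ₀'
    rw [← Finset.card_pos]
    by_contra hemp
    have hc0 : (MWB.SC n Q γ₀').card = 0 := by omega
    have hb : size Q ≤ (MWB.SC n Q γ₀').card + ∑ γ ∈ Γ'.erase γ₀', (MWB.SC n Q γ).card := by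
      apply MWB.cover_bound
      intro x
      obtain ⟨γ, hγ, hx⟩ := hcov x
      by_cases h1 : γ = γ₀'
      · exact Or.inl (h1 ▸ hx)
      · exact Or.inr ⟨γ, Finset.mem_erase.mpr ⟨h1, (hmemΓ' γ).mpr hγ⟩, hx⟩
    have hsum : ∑ γ ∈ Γ'.erase γ₀', (MWB.SC n Q γ).card ≤ (Γ'.erase γ₀').card * n :=
      MWB.sum_SC_le n Q _ (fun γ hγ =>
        hSle γ ((hmemΓ' γ).mp (Finset.mem_of_mem_erase hγ)))
    have hec : (Γ'.erase γ₀').card + 1 = k₃ + 3 := by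
      have := Finset.card_erase_add_one ((hmemΓ' γ₀').mpr hγ₀')
      omega
    have hec' : (Γ'.erase γ₀').card = k₃ + 2 := by omega
    rw [hec'] at hsum
    nlinarith [hbig, hb, hsum, hc0]
  -- disjointness of the other intersections from `S δ ∪ S ε`
  have F4 : ∀ γ ∈ A, ∀ p : ↥Q, p ∈ MWB.SC n Q γ →
      p ∈ MWB.SC n Q δ ∪ MWB.SC n Q ε → False := by
    intro γ₁ hγ₁A p hp1 hp2
    have hb : size Q ≤ ((MWB.SC n Q δ ∪ MWB.SC n Q ε) ∪ MWB.SC n Q γ₁).card +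
        ∑ γ ∈ A.erase γ₁, (MWB.SC n Q γ).card := by
      refine hcb _ _ ?_ Finset.subset_union_left
      intro γ hγ
      by_cases h1 : γ = γ₁
      · exact Or.inr (h1 ▸ Finset.subset_union_right)
      · exact Or.inl (Finset.mem_erase.mpr ⟨h1, hγ⟩)
    have hint := Finset.card_union_add_card_inter
      (MWB.SC n Q δ ∪ MWB.SC n Q ε) (MWB.SC n Q γ₁)
    have hpos : 0 < ((MWB.SC n Q δ ∪ MWB.SC n Q ε) ∩ MWB.SC n Q γ₁).card :=
      Finset.card_pos.mpr ⟨p, Finset.mem_inter.mpr ⟨hp2, hp1⟩⟩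
    have hsum : ∑ γ ∈ A.erase γ₁, (MWB.SC n Q γ).card ≤ (A.erase γ₁).card * n :=
      MWB.sum_SC_le n Q _ (fun γ hγ => hAle γ (Finset.mem_of_mem_erase hγ))
    have hec : (A.erase γ₁).card + 1 = k₃ + 1 := by
      have := Finset.card_erase_add_one hγ₁A
      omega
    have hec' : (A.erase γ₁).card = k₃ := by omega
    rw [hec'] at hsum
    have hγ₁c := F1 γ₁ hγ₁A
    nlinarith [hbig, hb, hint, hpos, hsum, hγ₁c, F2]
  -- pairwise disjointness of the other intersections
  have F5 : ∀ γ₁ γ₂, γ₁ ∈ A → γ₂ ∈ A → γ₁ ≠ γ₂ → ∀ p : ↥Q,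
      p ∈ MWB.SC n Q γ₁ → p ∈ MWB.SC n Q γ₂ → False := by
    intro γ₁ γ₂ hγ₁A hγ₂A hne' p hp1 hp2
    have hγ₂e : γ₂ ∈ A.erase γ₁ := Finset.mem_erase.mpr ⟨Ne.symm hne', hγ₂A⟩
    have hb : size Q ≤ ((MWB.SC n Q δ ∪ MWB.SC n Q ε) ∪
        (MWB.SC n Q γ₁ ∪ MWB.SC n Q γ₂)).card +
        ∑ γ ∈ (A.erase γ₁).erase γ₂, (MWB.SC n Q γ).card := by
      refine hcb _ _ ?_ Finset.subset_union_left
      intro γ hγ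
      by_cases h1 : γ = γ₁
      · exact Or.inr (h1 ▸ (Finset.subset_union_left.trans Finset.subset_union_right))
      by_cases h2 : γ = γ₂
      · exact Or.inr (h2 ▸ (Finset.subset_union_right.trans Finset.subset_union_right))
      · exact Or.inl (Finset.mem_erase.mpr ⟨h2, Finset.mem_erase.mpr ⟨h1, hγ⟩⟩)
    have hint := Finset.card_union_add_card_inter (MWB.SC n Q γ₁) (MWB.SC n Q γ₂)
    have hpos : 0 < (MWB.SC n Q γ₁ ∩ MWB.SC n Q γ₂).card :=
      Finset.card_pos.mpr ⟨p, Finset.mem_inter.mpr ⟨hp1, hp2⟩⟩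
    have hBle : ((MWB.SC n Q δ ∪ MWB.SC n Q ε) ∪
        (MWB.SC n Q γ₁ ∪ MWB.SC n Q γ₂)).card ≤
        (MWB.SC n Q δ ∪ MWB.SC n Q ε).card +
        (MWB.SC n Q γ₁ ∪ MWB.SC n Q γ₂).card := Finset.card_union_le _ _
    have hsum : ∑ γ ∈ (A.erase γ₁).erase γ₂, (MWB.SC n Q γ).card ≤
        ((A.erase γ₁).erase γ₂).card * n :=
      MWB.sum_SC_le n Q _ (fun γ hγ =>
        hAle γ (Finset.mem_of_mem_erase (Finset.mem_of_mem_erase hγ)))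
    have hec1 : ((A.erase γ₁).erase γ₂).card + 1 = (A.erase γ₁).card :=
      Finset.card_erase_add_one hγ₂e
    have hec2 : (A.erase γ₁).card + 1 = k₃ + 1 := by
      have := Finset.card_erase_add_one hγ₁A
      omega
    have hkk : k₃ = ((A.erase γ₁).erase γ₂).card + 1 := by omega
    rw [hkk] at hbig
    have hγ₁c := F1 γ₁ hγ₁A
    have hγ₂c := F1 γ₂ hγ₂A
    nlinarith [hbig, hb, hint, hpos, hBle, hsum, hγ₁c, hγ₂c, F2]
  -- choose the third class γ₀ and set up the exchange construction
  obtain ⟨γ₀, hγ₀A⟩ := Finset.card_pos.mp (show 0 < A.card by omega)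
  obtain ⟨hγ₀Γ, hγ₀δ, hγ₀ε⟩ := (hmemA γ₀).mp hγ₀A
  have hUcard : (MWB.SC n Q γ₀).card = n := F1 γ₀ hγ₀A
  obtain ⟨x, hxU, hxmax⟩ := (MWB.SC n Q γ₀).exists_maximal (Finset.card_pos.mp (by omega))
  have hxmaxU : ∀ w ∈ MWB.SC n Q γ₀, x ≤ w → w = x := by
    intro w hw hxw
    by_contra h
    exact h (le_antisymm (hxmax hw hxw) hxw)
  have hU'down : IsDownset Q ((MWB.SC n Q γ₀).erase x) := by
    intro p q hp hqp
    have hpU : p ∈ MWB.SC n Q γ₀ := Finset.mem_of_mem_erase hp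
    have hqU : q ∈ MWB.SC n Q γ₀ := MWB.SC_downset n γ₀ hpU hqp
    refine Finset.mem_erase.mpr ⟨?_, hqU⟩
    intro hqx
    exact (Finset.mem_erase.mp hp).1 (hxmaxU p hpU (hqx ▸ hqp))
  have hU'c1 : ((MWB.SC n Q γ₀).erase x).card + 1 = n := by
    have := Finset.card_erase_add_one hxU
    omega
  obtain ⟨u, hu⟩ : ((MWB.SC n Q γ₀).erase x).Nonempty := Finset.card_pos.mp (by omega)
  obtain ⟨s, hsδ⟩ := F3 δ hδΓ
  have hsV : s ∉ (MWB.SC n Q γ₀).erase x := by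
    intro h
    exact F4 γ₀ hγ₀A s (Finset.mem_of_mem_erase h) (Finset.mem_union_left _ hsδ)
  set W : Finset ↥Q :=
    (Finset.univ \ ((MWB.SC n Q γ₀).erase x)).filter (fun w => w ≤ s) with hWdef
  have hsW : s ∈ W := by
    rw [hWdef]
    exact Finset.mem_filter.mpr
      ⟨Finset.mem_sdiff.mpr ⟨Finset.mem_univ s, hsV⟩, le_refl s⟩
  obtain ⟨m, hmW, hmmin⟩ := W.exists_minimal ⟨s, hsW⟩
  have hmV : m ∉ (MWB.SC n Q γ₀).erase x := by
    have := (Finset.mem_filter.mp hmW).1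
    exact (Finset.mem_sdiff.mp this).2
  have hms : m ≤ s := (Finset.mem_filter.mp hmW).2
  have hmminV : ∀ w, w ∉ (MWB.SC n Q γ₀).erase x → w ≤ m → w = m := by
    intro w hw hwm
    by_contra hne'
    refine hne' (le_antisymm hwm (hmmin ?_ hwm))
    rw [hWdef]
    exact Finset.mem_filter.mpr
      ⟨Finset.mem_sdiff.mpr ⟨Finset.mem_univ w, hw⟩, le_trans hwm hms⟩
  have hmx : m ≠ x := by
    intro h
    have hxs : x ≤ s := h ▸ hms
    have hxδ : x ∈ MWB.SC n Q δ := MWB.mem_SC.mpr fun D h1 h2 h3 =>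
      h1 ((MWB.mem_SC.mp hsδ) D h1 h2 h3) hxs
    exact F4 γ₀ hγ₀A x hxU (Finset.mem_union_left _ hxδ)
  have hmU : m ∉ MWB.SC n Q γ₀ := fun h => hmV (Finset.mem_erase.mpr ⟨hmx, h⟩)
  have hMcard : (insert m ((MWB.SC n Q γ₀).erase x)).card = n := by
    rw [Finset.card_insert_of_notMem hmV]
    omega
  have hMdown : IsDownset Q (insert m ((MWB.SC n Q γ₀).erase x)) := by
    intro p q hp hqp
    rcases Finset.mem_insert.mp hp with hpm | hpU'
    · rw [hpm] at hqp
      by_cases hq : q ∈ (MWB.SC n Q γ₀).erase x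
      · exact Finset.mem_insert_of_mem hq
      · rw [hmminV q hq hqp]
        exact Finset.mem_insert_self _ _
    · exact Finset.mem_insert_of_mem (hU'down hpU' hqp)
  have hγsΓ : cls (subposet Q (insert m ((MWB.SC n Q γ₀).erase x))) ∈ Γ := by
    rw [← hwit]
    exact ⟨_, hMdown, hMcard, rfl⟩
  have hotherΓ : ∀ γ ∈ Γ, γ ≠ δ → γ ≠ ε → (MWB.SC n Q γ).card = n :=
    fun γ hγ h1 h2 => F1 γ ((hmemA γ).mpr ⟨hγ, h1, h2⟩)
  have hdisjUδε : ∀ γ ∈ Γ, γ ≠ δ → γ ≠ ε →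
      ∀ p, p ∈ MWB.SC n Q γ → p ∈ MWB.SC n Q δ ∪ MWB.SC n Q ε → False :=
    fun γ hγ h1 h2 p hp hp2 => F4 γ ((hmemA γ).mpr ⟨hγ, h1, h2⟩) p hp hp2
  have hdisj2δε : ∀ γ γ', γ ∈ Γ → γ' ∈ Γ → γ ≠ δ → γ ≠ ε → γ' ≠ δ → γ' ≠ ε → γ ≠ γ' →
      ∀ p, p ∈ MWB.SC n Q γ → p ∈ MWB.SC n Q γ' → False :=
    fun γ γ' hγ hγ' h1 h2 h1' h2' hne' p hp hp' =>
      F5 γ γ' ((hmemA γ).mpr ⟨hγ, h1, h2⟩) ((hmemA γ').mpr ⟨hγ', h1', h2'⟩) hne' p hp hp'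
  by_cases hγsδ : cls (subposet Q (insert m ((MWB.SC n Q γ₀).erase x))) = δ
  · exact MWB.endgame n Q Γ hwit δ ε γ₀ hεΓ hγ₀Γ hγ₀δ hγ₀ε F2 (F3 δ hδΓ) (hSle ε hεΓ)
      hotherΓ hdisjUδε hdisj2δε x m u hn2 hU'down hxU hu hmU hMdown hMcard hγsδ
  by_cases hγsε : cls (subposet Q (insert m ((MWB.SC n Q γ₀).erase x))) = ε
  · have F2' : (MWB.SC n Q ε ∪ MWB.SC n Q δ).card = n + 1 := by
      rw [Finset.union_comm]; exact F2
    have hother' : ∀ γ ∈ Γ, γ ≠ ε → γ ≠ δ → (MWB.SC n Q γ).card = n :=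
      fun γ hγ h1 h2 => hotherΓ γ hγ h2 h1
    have hdisjU' : ∀ γ ∈ Γ, γ ≠ ε → γ ≠ δ →
        ∀ p, p ∈ MWB.SC n Q γ → p ∈ MWB.SC n Q ε ∪ MWB.SC n Q δ → False := by
      intro γ hγ h1 h2 p hp hp2
      rw [Finset.union_comm] at hp2
      exact hdisjUδε γ hγ h2 h1 p hp hp2
    have hdisj2' : ∀ γ γ', γ ∈ Γ → γ' ∈ Γ → γ ≠ ε → γ ≠ δ → γ' ≠ ε → γ' ≠ δ → γ ≠ γ' →
        ∀ p, p ∈ MWB.SC n Q γ → p ∈ MWB.SC n Q γ' → False :=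
      fun γ γ' hγ hγ' h1 h2 h1' h2' hne' p hp hp' =>
        hdisj2δε γ γ' hγ hγ' h2 h1 h2' h1' hne' p hp hp'
    exact MWB.endgame n Q Γ hwit ε δ γ₀ hδΓ hγ₀Γ hγ₀ε hγ₀δ F2' (F3 ε hεΓ) (hSle δ hδΓ)
      hother' hdisjU' hdisj2' x m u hn2 hU'down hxU hu hmU hMdown hMcard hγsε
  · have hγsA : cls (subposet Q (insert m ((MWB.SC n Q γ₀).erase x))) ∈ A :=
      (hmemA _).mpr ⟨hγsΓ, hγsδ, hγsε⟩
    have hsubM : MWB.SC n Q (cls (subposet Q (insert m ((MWB.SC n Q γ₀).erase x)))) ⊆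
        insert m ((MWB.SC n Q γ₀).erase x) := MWB.SC_subset hMdown hMcard rfl
    have hγscard := F1 _ hγsA
    have heq : MWB.SC n Q (cls (subposet Q (insert m ((MWB.SC n Q γ₀).erase x)))) =
        insert m ((MWB.SC n Q γ₀).erase x) :=
      Finset.eq_of_subset_of_card_le hsubM (by omega)
    by_cases h3 : cls (subposet Q (insert m ((MWB.SC n Q γ₀).erase x))) = γ₀
    · rw [h3] at heq
      exact hmU (by rw [heq]; exact Finset.mem_insert_self m _)
    · have huγs : u ∈ MWB.SC n Q (cls (subposet Q (insert m ((MWB.SC n Q γ₀).erase x)))) := by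
        rw [heq]
        exact Finset.mem_insert_of_mem hu
      exact F5 _ γ₀ hγsA hγ₀A h3 u huγs (Finset.mem_of_mem_erase hu)
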